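/- Consider the system of equations a_i x_i = Σ_{j=1}^n a_ij f_j(y_j) + I_i, b_i y_i = Σ_{j=1}^n b_ij g_j(x_j) + J_i, i = 1,…,n, where a_i > 0, b_i > 0, I_i, J_i, a_ij, b_ij ∈ ℝ, and f_j, g_j : ℝ → ℝ satisfy |f_j(u) − f_j(v)| ≤ L_j^f|u − v| and |g_j(u) − g_j(v)| ≤ L_j^g|u − v|. Define the 2n×2n matrices A and B in block form: A has zero diagonal blocks, upper-right block with (i,j) entry |a_ij|L_j^f/a_i and lower-left block with (i,j) entry |b_ij|L_j^g/b_i; B has zero diagonal blocks, upper-right block with (i,j) entry |a_ij|L_j^f/b_j and lower-left block with (i,j) entry |b_ij|L_j^g/a_j. Suppose at least one of the following conditions holds: (1) max|λ(A)| < 1 over all eigenvalues of A; (2) max_i Σ_{j=1}^n |a_ij|L_j^f/a_i < 1 and max_i Σ_{j=1}^n |b_ij|L_j^g/b_i < 1; (3) max_j Σ_{i=1}^n |a_ij|L_j^f/a_i < 1 and max_j Σ_{i=1}^n |b_ij|L_j^g/b_i < 1; (4) Σ_{i=1}^n Σ_{j=1}^n [(|a_ij|L_j^f/a_i)² + (|b_ij|L_j^g/b_i)²]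 < 1; (5) max|λ(B)| < 1 over all eigenvalues of B; (6) max_i Σ_{j=1}^n |a_ij|L_j^f/b_j < 1 and max_i Σ_{j=1}^n |b_ij|L_j^g/a_j < 1; (7) max_j Σ_{i=1}^n |a_ij|L_j^f/b_j < 1 and max_j Σ_{i=1}^n |b_ij|L_j^g/a_j < 1; (8) Σ_{i=1}^n Σ_{j=1}^n [(|a_ij|L_j^f/b_j)² + (|b_ij|L_j^g/a_j)²] < 1. Then the system has a unique solution (x_1,…,x_n,y_1,…,y_n) ∈ ℝ^{2n}. -/

import Mathlib

open Matrix Filter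

section Linfty

attribute [local instance] Matrix.linftyOpSemiNormedRing Matrix.linftyOpNormedRing
  Matrix.linftyOpNormedAlgebra

variable {N : Type*} [Fintype N] [DecidableEq N]

private lemma aux_rowsum_le_norm (M : Matrix N N ℂ) (i : N) : ∑ j, ‖M i j‖ ≤ ‖M‖ := by
  have h1 : (∑ j, ‖M i j‖₊) ≤ ‖M‖₊ := by
    rw [Matrix.linfty_opNNNorm_def]
    exact Finset.le_sup (f := fun i => ∑ j, ‖M i j‖₊) (Finset.mem_univ i)
  calc ∑ j, ‖M i j‖ = ((∑ j, ‖M i j‖₊ : NNReal) : ℝ) := by push_cast; rfl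
  _ ≤ _ := by exact_mod_cast h1

private lemma aux_linfty_nnnorm_lt_one {M : Matrix N N ℂ} (h : ∀ i, ∑ j, ‖M i j‖₊ < 1) :
    ‖M‖₊ < 1 := by
  rw [Matrix.linfty_opNNNorm_def]
  exact (Finset.sup_lt_iff (by norm_num)).mpr (fun i _ => h i)

private lemma aux_spec_lt_of_rowsum [Nonempty N] {M : Matrix N N ℂ}
    (h : ∀ i, ∑ j, ‖M i j‖ < 1) : ∀ μ ∈ spectrum ℂ M, ‖μ‖ < 1 := by
  intro μ hμ
  have h' : ∀ i, ∑ j, ‖M i j‖₊ < 1 := by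
    intro i
    have h2 : ((∑ j, ‖M i j‖₊ : NNReal) : ℝ) < 1 := by push_cast; simpa using h i
    exact_mod_cast h2
  have h1 := spectrum.norm_le_norm_of_mem hμ
  have h2 : ‖M‖ < 1 := by exact_mod_cast aux_linfty_nnnorm_lt_one h'
  linarith

private lemma aux_spectrum_transpose (M : Matrix N N ℂ) : spectrum ℂ Mᵀ = spectrum ℂ M := by
  ext μ
  simp only [spectrum.mem_iff, not_iff_not, Matrix.isUnit_iff_isUnit_det]
  have : algebraMap ℂ (Matrix N N ℂ) μ - Mᵀ = (algebraMap ℂ (Matrix N N ℂ) μ - M)ᵀ := by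
    rw [Matrix.transpose_sub]
    congr 1
    rw [Matrix.algebraMap_eq_diagonal, Matrix.diagonal_transpose]
  rw [this, Matrix.det_transpose]

private lemma aux_exists_pow_norm_lt_one [Nonempty N] (M : Matrix N N ℂ)
    (h : ∀ μ ∈ spectrum ℂ M, ‖μ‖ < 1) : ∃ k, 1 ≤ k ∧ ‖M ^ k‖ < 1 := by
  have hrad : spectralRadius ℂ M < 1 := by
    have := spectrum.spectralRadius_lt_of_forall_lt_of_nonempty (spectrum.nonempty M)
      (r := 1) (fun k hk => by simpa [← NNReal.coe_lt_coe] using h k hk)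
    simpa using this
  have htend := spectrum.pow_nnnorm_pow_one_div_tendsto_nhds_spectralRadius M
  have hev : ∀ᶠ k : ℕ in atTop, (‖M ^ k‖₊ : ENNReal) ^ (1/(k:ℝ)) < 1 :=
    htend.eventually_lt_const hrad
  obtain ⟨k, hk, hk1⟩ := (hev.and (eventually_ge_atTop 1)).exists
  refine ⟨k, hk1, ?_⟩
  have hkne : (k:ℝ) ≠ 0 := by positivity
  have hx : ((‖M ^ k‖₊ : ENNReal) ^ (1/(k:ℝ))) ^ (k:ℝ) < 1 :=
    ENNReal.rpow_lt_one hk (by positivity)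
  rw [← ENNReal.rpow_mul, one_div, inv_mul_cancel₀ hkne, ENNReal.rpow_one] at hx
  have := ENNReal.coe_lt_one_iff.mp hx
  exact_mod_cast this

private lemma aux_pow_entries_nonneg (A : Matrix N N ℝ) (hA0 : ∀ s t, 0 ≤ A s t) (k : ℕ) :
    ∀ s t, 0 ≤ (A ^ k) s t := by
  induction k with
  | zero => intro s t; simp [Matrix.one_apply]; split <;> norm_num
  | succ k ih =>
    intro s t
    rw [pow_succ, Matrix.mul_apply]
    exact Finset.sum_nonneg fun u _ => mul_nonneg (ih s u) (hA0 u t)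

private lemma aux_unique_fixed [Nonempty N]
    (T : (N → ℝ) → (N → ℝ)) (A : Matrix N N ℝ) (hA0 : ∀ s t, 0 ≤ A s t)
    (hT : ∀ z w s, |T z s - T w s| ≤ ∑ t, A s t * |z t - w t|)
    (hspec0 : ∀ μ ∈ spectrum ℂ (A.map (Complex.ofReal)), ‖μ‖ < 1) :
    ∃! z : N → ℝ, T z = z := by
  obtain ⟨k, hk1, hknorm⟩ := aux_exists_pow_norm_lt_one (A.map (Complex.ofReal)) hspec0
  have hiter : ∀ (m : ℕ) (z w : N → ℝ) (s : N),
      |T^[m] z s - T^[m] w s| ≤ ∑ t, (A ^ m) s t * |z t - w t| := by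
    intro m
    induction m with
    | zero =>
      intro z w s
      simp only [pow_zero, Function.iterate_zero, id_eq]
      rw [Finset.sum_eq_single s]
      · simp [Matrix.one_apply]
      · intro t _ ht; simp [Matrix.one_apply, Ne.symm ht]
      · simp
    | succ m ih =>
      intro z w s
      rw [Function.iterate_succ_apply, Function.iterate_succ_apply]
      calc |T^[m] (T z) s - T^[m] (T w) s| ≤ ∑ t, (A ^ m) s t * |T z t - T w t| := ih _ _ _
      _ ≤ ∑ t, (A ^ m) s t * (∑ u, A t u * |z u - w u|) := by
          refine Finset.sum_le_sum fun t _ => ?_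
          exact mul_le_mul_of_nonneg_left (hT z w t) (aux_pow_entries_nonneg A hA0 m s t)
      _ = ∑ u, (A ^ (m+1)) s u * |z u - w u| := by
          simp_rw [Finset.mul_sum]
          rw [Finset.sum_comm]
          refine Finset.sum_congr rfl fun u _ => ?_
          rw [pow_succ, Matrix.mul_apply, Finset.sum_mul]
          exact Finset.sum_congr rfl fun t _ => by ring
  have hmap : (A.map (Complex.ofReal)) ^ k = (A ^ k).map (Complex.ofReal) := by
    have := map_pow (Complex.ofRealHom.mapMatrix) A k
    exact this.symm
  set K : NNReal := ‖(A.map (Complex.ofReal)) ^ k‖₊ with hK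
  have hKlt : K < 1 := by exact_mod_cast hknorm
  have hrow : ∀ s, ∑ t, (A ^ k) s t ≤ (K : ℝ) := by
    intro s
    calc ∑ t, (A ^ k) s t = ∑ t, ‖((A ^ k).map (Complex.ofReal)) s t‖ := by
          refine Finset.sum_congr rfl fun t _ => ?_
          simp [Matrix.map_apply, Complex.norm_real,
            abs_of_nonneg (aux_pow_entries_nonneg A hA0 k s t)]
    _ ≤ ‖((A ^ k).map (Complex.ofReal))‖ := aux_rowsum_le_norm _ s
    _ = (K : ℝ) := by rw [hK, hmap]; rfl
  have hlip : LipschitzWith K (T^[k]) := by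
    refine LipschitzWith.of_dist_le_mul fun z w => ?_
    rw [dist_eq_norm, dist_eq_norm]
    refine (pi_norm_le_iff_of_nonneg (by positivity)).mpr fun s => ?_
    have h1 : |T^[k] z s - T^[k] w s| ≤ ∑ t, (A ^ k) s t * |z t - w t| := hiter k z w s
    have h2 : ∑ t, (A ^ k) s t * |z t - w t| ≤ ∑ t, (A ^ k) s t * ‖z - w‖ := by
      refine Finset.sum_le_sum fun t _ => ?_
      refine mul_le_mul_of_nonneg_left ?_ (aux_pow_entries_nonneg A hA0 k s t)
      calc |z t - w t| = ‖(z - w) t‖ := by simp [Real.norm_eq_abs]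
      _ ≤ ‖z - w‖ := norm_le_pi_norm _ t
    rw [← Finset.sum_mul] at h2
    have h3 : (∑ t, (A ^ k) s t) * ‖z - w‖ ≤ (K : ℝ) * ‖z - w‖ :=
      mul_le_mul_of_nonneg_right (hrow s) (norm_nonneg _)
    calc ‖(T^[k] z - T^[k] w) s‖ = |T^[k] z s - T^[k] w s| := by simp [Real.norm_eq_abs]
    _ ≤ _ := le_trans h1 (le_trans h2 h3)
  have hC : ContractingWith K (T^[k]) := ⟨hKlt, hlip⟩
  refine ⟨hC.fixedPoint (T^[k]), hC.isFixedPt_fixedPoint_iterate, fun z hz => ?_⟩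
  exact hC.fixedPoint_unique ((Function.IsFixedPt.iterate hz k))

end Linfty

section Frob

attribute [local instance] Matrix.frobeniusSeminormedAddCommGroup
  Matrix.frobeniusNormedAddCommGroup Matrix.frobeniusNormedRing Matrix.frobeniusNormedAlgebra

private lemma aux_spec_lt_of_frob {N : Type*} [Fintype N] [DecidableEq N] {M : Matrix N N ℂ}
    (h : (∑ i, ∑ j, ‖M i j‖ ^ 2) < 1) :
    ∀ μ ∈ spectrum ℂ M, ‖μ‖ < 1 := by
  have hfn : ‖M‖ < 1 := by
    rw [Matrix.frobenius_norm_def]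
    refine Real.rpow_lt_one (by positivity) ?_ (by norm_num)
    calc ∑ i, ∑ j, ‖M i j‖ ^ (2:ℝ) = ∑ i, ∑ j, ‖M i j‖ ^ (2:ℕ) := by
          refine Finset.sum_congr rfl fun i _ => Finset.sum_congr rfl fun j _ => ?_
          rw [show ((2:ℝ)) = ((2:ℕ):ℝ) by norm_num, Real.rpow_natCast]
    _ < 1 := h
  intro μ hμ
  by_contra hge
  push_neg at hge
  set c := ‖(1 : Matrix N N ℂ)‖ with hc
  obtain ⟨k, hk⟩ := exists_pow_lt_of_lt_one (by positivity : (0:ℝ) < (c + 1)⁻¹) hfn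
  have hMk : ‖M‖ ^ (k+1) ≤ ‖M‖ ^ k :=
    pow_le_pow_of_le_one (norm_nonneg _) hfn.le (Nat.le_succ k)
  have hμk : μ ^ (k+1) ∈ spectrum ℂ (M ^ (k+1)) := by
    rw [spectrum.map_pow_of_pos M (Nat.succ_pos k)]
    exact Set.mem_image_of_mem _ hμ
  have h1 : ‖μ ^ (k+1)‖ ≤ ‖M ^ (k+1)‖ * c := by
    have := spectrum.subset_closedBall_norm_mul (𝕜 := ℂ) (M ^ (k+1)) hμk
    simpa [Metric.mem_closedBall, dist_eq_norm] using this
  have h2 : ‖M ^ (k+1)‖ ≤ ‖M‖ ^ (k+1) := norm_pow_le' M (Nat.succ_pos k)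
  have h3 : (1:ℝ) ≤ ‖μ ^ (k+1)‖ := by
    rw [norm_pow]; exact one_le_pow₀ hge
  have hcc : (c+1)⁻¹ * (c+1) = 1 := inv_mul_cancel₀ (by positivity)
  have hcn : 0 ≤ c := norm_nonneg _
  have hMn : 0 ≤ ‖M ^ (k+1)‖ := norm_nonneg _
  have hMkn : (0:ℝ) ≤ ‖M‖ ^ k := pow_nonneg (norm_nonneg _) _
  nlinarith [mul_le_mul_of_nonneg_right h2 hcn, mul_le_mul_of_nonneg_right hMk hcn,
    mul_lt_mul_of_pos_right hk (by positivity : (0:ℝ) < c + 1)]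

end Frob

private lemma aux_spectrum_conj {N : Type*} [Fintype N] [DecidableEq N] (d : N → ℂ)
    (hd : ∀ s, d s ≠ 0) (M M' : Matrix N N ℂ) (h : ∀ s t, M' s t = d s * M s t * (d t)⁻¹) :
    spectrum ℂ M' = spectrum ℂ M := by
  have hu : (Matrix.diagonal d) * (Matrix.diagonal fun s => (d s)⁻¹) = 1 := by
    rw [Matrix.diagonal_mul_diagonal,
      show (fun i => d i * (d i)⁻¹) = fun _ => (1:ℂ) from funext fun s => mul_inv_cancel₀ (hd s),
      ← Matrix.diagonal_one]
  have hu' : (Matrix.diagonal fun s => (d s)⁻¹) * (Matrix.diagonal d) = 1 := by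
    rw [Matrix.diagonal_mul_diagonal,
      show (fun i => (d i)⁻¹ * d i) = fun _ => (1:ℂ) from funext fun s => inv_mul_cancel₀ (hd s),
      ← Matrix.diagonal_one]
  let u : (Matrix N N ℂ)ˣ := ⟨Matrix.diagonal d, Matrix.diagonal fun s => (d s)⁻¹, hu, hu'⟩
  have key : M' = (u : Matrix N N ℂ) * M * ((u⁻¹ : (Matrix N N ℂ)ˣ) : Matrix N N ℂ) := by
    ext s t
    show M' s t = ((Matrix.diagonal d * M) * Matrix.diagonal fun s => (d s)⁻¹) s t
    rw [Matrix.mul_diagonal, Matrix.diagonal_mul, h]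
  rw [key, spectrum.units_conjugate]

private lemma aux_block_spec {n : ℕ} (hn : 0 < n) (P Q : Fin n → Fin n → ℝ)
    (hP : ∀ i j, 0 ≤ P i j) (hQ : ∀ i j, 0 ≤ Q i j)
    (C : Matrix (Fin n ⊕ Fin n) (Fin n ⊕ Fin n) ℝ)
    (hC : C = Matrix.fromBlocks 0 (Matrix.of P) (Matrix.of Q) 0)
    (hcond : ((∀ i, ∑ j, P i j < 1) ∧ (∀ i, ∑ j, Q i j < 1)) ∨
       ((∀ j, ∑ i, P i j < 1) ∧ (∀ j, ∑ i, Q i j < 1)) ∨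
       (∑ i, ∑ j, (P i j ^ 2 + Q i j ^ 2) < 1)) :
    ∀ μ ∈ spectrum ℂ (C.map Complex.ofReal), ‖μ‖ < 1 := by
  haveI : Nonempty (Fin n ⊕ Fin n) := ⟨Sum.inl ⟨0, hn⟩⟩
  have hCn : ∀ s t, 0 ≤ C s t := by
    intro s t
    rw [hC]
    rcases s with i | i <;> rcases t with j | j <;> simp [Matrix.fromBlocks]
    exacts [hP i j, hQ i j]
  have hnorm : ∀ s t, ‖(C.map Complex.ofReal) s t‖ = C s t := fun s t => by
    rw [Matrix.map_apply, Complex.norm_real, Real.norm_eq_abs, abs_of_nonneg (hCn s t)]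
  rcases hcond with ⟨h1, h2⟩ | ⟨h1, h2⟩ | h4
  · refine aux_spec_lt_of_rowsum fun s => ?_
    rw [Finset.sum_congr rfl fun t _ => hnorm s t]
    rcases s with i | i
    · rw [Fintype.sum_sum_type]
      have hz : ∑ j, C (Sum.inl i) (Sum.inl j) = 0 :=
        Finset.sum_eq_zero fun j _ => by simp [hC]
      rw [hz, zero_add]
      calc ∑ j, C (Sum.inl i) (Sum.inr j) = ∑ j, P i j :=
            Finset.sum_congr rfl fun j _ => by simp [hC]
      _ < 1 := h1 i
    · rw [Fintype.sum_sum_type]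
      have hz : ∑ j, C (Sum.inr i) (Sum.inr j) = 0 :=
        Finset.sum_eq_zero fun j _ => by simp [hC]
      rw [hz, add_zero]
      calc ∑ j, C (Sum.inr i) (Sum.inl j) = ∑ j, Q i j :=
            Finset.sum_congr rfl fun j _ => by simp [hC]
      _ < 1 := h2 i
  · intro μ hμ
    rw [← aux_spectrum_transpose] at hμ
    refine aux_spec_lt_of_rowsum (fun s => ?_) μ hμ
    have he : ∀ t, ‖(C.map Complex.ofReal)ᵀ s t‖ = C t s := fun t => by
      rw [Matrix.transpose_apply]; exact hnorm t s
    rw [Finset.sum_congr rfl fun t _ => he t]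
    rcases s with j | j
    · rw [Fintype.sum_sum_type]
      have hz : ∑ i, C (Sum.inl i) (Sum.inl j) = 0 :=
        Finset.sum_eq_zero fun i _ => by simp [hC]
      rw [hz, zero_add]
      calc ∑ i, C (Sum.inr i) (Sum.inl j) = ∑ i, Q i j :=
            Finset.sum_congr rfl fun i _ => by simp [hC]
      _ < 1 := h2 j
    · rw [Fintype.sum_sum_type]
      have hz : ∑ i, C (Sum.inr i) (Sum.inr j) = 0 :=
        Finset.sum_eq_zero fun i _ => by simp [hC]
      rw [hz, add_zero]
      calc ∑ i, C (Sum.inl i) (Sum.inr j) = ∑ i, P i j :=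
            Finset.sum_congr rfl fun i _ => by simp [hC]
      _ < 1 := h1 j
  · refine aux_spec_lt_of_frob ?_
    calc ∑ s, ∑ t, ‖(C.map Complex.ofReal) s t‖ ^ 2 = ∑ s, ∑ t, C s t ^ 2 := by
          refine Finset.sum_congr rfl fun s _ => Finset.sum_congr rfl fun t _ => ?_
          rw [hnorm]
    _ = ∑ i, ∑ j, (P i j ^ 2 + Q i j ^ 2) := by
          rw [Fintype.sum_sum_type]
          simp only [Fintype.sum_sum_type]
          have e1 : ∀ i : Fin n, (∑ j, C (Sum.inl i) (Sum.inl j) ^ 2)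
              + ∑ j, C (Sum.inl i) (Sum.inr j) ^ 2 = ∑ j, P i j ^ 2 := by
            intro i
            rw [Finset.sum_eq_zero fun j _ => by simp [hC], zero_add]
            exact Finset.sum_congr rfl fun j _ => by simp [hC]
          have e2 : ∀ i : Fin n, (∑ j, C (Sum.inr i) (Sum.inl j) ^ 2)
              + ∑ j, C (Sum.inr i) (Sum.inr j) ^ 2 = ∑ j, Q i j ^ 2 := by
            intro i
            have hz2 : ∑ j, C (Sum.inr i) (Sum.inr j) ^ 2 = 0 :=
              Finset.sum_eq_zero fun j _ => by simp [hC]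
            rw [hz2, add_zero]
            exact Finset.sum_congr rfl fun j _ => by simp [hC]
          rw [Finset.sum_congr rfl fun i _ => e1 i, Finset.sum_congr rfl fun i _ => e2 i,
            ← Finset.sum_add_distrib]
          exact Finset.sum_congr rfl fun i _ => by rw [Finset.sum_add_distrib]
    _ < 1 := h4

/-- Theorem 3.4: under any of the eight conditions on the matrices `A` and `B` built from
the parameters, the equilibrium system `a_i x_i = Σ_j a_ij f_j(y_j) + I_i`,
`b_i y_i = Σ_j b_ij g_j(x_j) + J_i` has a unique solution. -/
theorem stmt13
    (n : ℕ)
    (a b : Fin n → ℝ) (aij bij : Fin n → Fin n → ℝ)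
    (I J : Fin n → ℝ)
    (f g : Fin n → ℝ → ℝ) (Lf Lg : Fin n → ℝ)
    (ha : ∀ i, 0 < a i) (hb : ∀ i, 0 < b i)
    (hLf_nonneg : ∀ j, 0 ≤ Lf j) (hLg_nonneg : ∀ j, 0 ≤ Lg j)
    (hf : ∀ j u v, |f j u - f j v| ≤ Lf j * |u - v|)
    (hg : ∀ j u v, |g j u - g j v| ≤ Lg j * |u - v|)
    -- the block matrices A and B
    (A B : Matrix (Fin n ⊕ Fin n) (Fin n ⊕ Fin n) ℝ)
    (hA : A = Matrix.fromBlocks 0 (Matrix.of fun i j => |aij i j| * Lf j / a i)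
      (Matrix.of fun i j => |bij i j| * Lg j / b i) 0)
    (hB : B = Matrix.fromBlocks 0 (Matrix.of fun i j => |aij i j| * Lf j / b j)
      (Matrix.of fun i j => |bij i j| * Lg j / a j) 0)
    -- at least one of the eight conditions
    (hcond :
      (∀ μ : ℂ, μ ∈ spectrum ℂ (A.map (Complex.ofReal)) → ‖μ‖ < 1) ∨
      ((∀ i, ∑ j, |aij i j| * Lf j / a i < 1) ∧ (∀ i, ∑ j, |bij i j| * Lg j / b i < 1)) ∨
      ((∀ j, ∑ i, |aij i j| * Lf j / a i < 1) ∧ (∀ j, ∑ i, |bij i j| * Lg j / b i < 1)) ∨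
      (∑ i, ∑ j, ((|aij i j| * Lf j / a i) ^ 2 + (|bij i j| * Lg j / b i) ^ 2) < 1) ∨
      (∀ μ : ℂ, μ ∈ spectrum ℂ (B.map (Complex.ofReal)) → ‖μ‖ < 1) ∨
      ((∀ i, ∑ j, |aij i j| * Lf j / b j < 1) ∧ (∀ i, ∑ j, |bij i j| * Lg j / a j < 1)) ∨
      ((∀ j, ∑ i, |aij i j| * Lf j / b j < 1) ∧ (∀ j, ∑ i, |bij i j| * Lg j / a j < 1)) ∨
      (∑ i, ∑ j, ((|aij i j| * Lf j / b j) ^ 2 + (|bij i j| * Lg j / a j) ^ 2) < 1)) :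
    ∃! p : (Fin n → ℝ) × (Fin n → ℝ),
      (∀ i, a i * p.1 i = ∑ j, aij i j * f j (p.2 j) + I i) ∧
      (∀ i, b i * p.2 i = ∑ j, bij i j * g j (p.1 j) + J i) := by
  rcases Nat.eq_zero_or_pos n with hn | hn
  · subst hn
    refine ⟨⟨fun i => i.elim0, fun i => i.elim0⟩, ⟨fun i => i.elim0, fun i => i.elim0⟩, ?_⟩
    intro q _
    exact Prod.ext (funext fun i => i.elim0) (funext fun i => i.elim0)
  haveI : Nonempty (Fin n ⊕ Fin n) := ⟨Sum.inl ⟨0, hn⟩⟩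
  have haP : ∀ i j, (0:ℝ) ≤ |aij i j| * Lf j / a i := fun i j =>
    div_nonneg (mul_nonneg (abs_nonneg _) (hLf_nonneg j)) (ha i).le
  have haQ : ∀ i j, (0:ℝ) ≤ |bij i j| * Lg j / b i := fun i j =>
    div_nonneg (mul_nonneg (abs_nonneg _) (hLg_nonneg j)) (hb i).le
  have hbP : ∀ i j, (0:ℝ) ≤ |aij i j| * Lf j / b j := fun i j =>
    div_nonneg (mul_nonneg (abs_nonneg _) (hLf_nonneg j)) (hb j).le
  have hbQ : ∀ i j, (0:ℝ) ≤ |bij i j| * Lg j / a j := fun i j =>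
    div_nonneg (mul_nonneg (abs_nonneg _) (hLg_nonneg j)) (ha j).le
  -- spectrum of B equals spectrum of A (similarity via the diagonal matrix diag(a, b))
  have hconj : spectrum ℂ (B.map Complex.ofReal) = spectrum ℂ (A.map Complex.ofReal) := by
    apply aux_spectrum_conj (Sum.elim (fun i => (a i : ℂ)) (fun i => (b i : ℂ)))
    · intro s
      rcases s with i | i
      · simpa using (ha i).ne'
      · simpa using (hb i).ne'
    · intro s t
      rcases s with i | i <;> rcases t with j | j
      · simp [hA, hB]
      · have hai : (a i : ℂ) ≠ 0 := by simpa using (ha i).ne'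
        have hbj : (b j : ℂ) ≠ 0 := by simpa using (hb j).ne'
        simp only [hA, hB, Matrix.map_apply, Matrix.fromBlocks_apply₁₂, Matrix.of_apply,
          Sum.elim_inl, Sum.elim_inr]
        push_cast
        field_simp
      · have hbi : (b i : ℂ) ≠ 0 := by simpa using (hb i).ne'
        have haj : (a j : ℂ) ≠ 0 := by simpa using (ha j).ne'
        simp only [hA, hB, Matrix.map_apply, Matrix.fromBlocks_apply₂₁, Matrix.of_apply,
          Sum.elim_inl, Sum.elim_inr]
        push_cast
        field_simp
      · simp [hA, hB]
  -- the spectral condition on A holds in all eight cases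
  have hspecA : ∀ μ ∈ spectrum ℂ (A.map Complex.ofReal), ‖μ‖ < 1 := by
    rcases hcond with h1 | h2 | h3 | h4 | h5 | h6 | h7 | h8
    · intro μ hμ; simpa using h1 μ hμ
    · exact aux_block_spec hn _ _ haP haQ A hA (Or.inl h2)
    · exact aux_block_spec hn _ _ haP haQ A hA (Or.inr (Or.inl h3))
    · exact aux_block_spec hn _ _ haP haQ A hA (Or.inr (Or.inr h4))
    · intro μ hμ; rw [← hconj] at hμ; simpa using h5 μ hμ
    · intro μ hμ; rw [← hconj] at hμ
      exact aux_block_spec hn _ _ hbP hbQ B hB (Or.inl h6) μ hμ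
    · intro μ hμ; rw [← hconj] at hμ
      exact aux_block_spec hn _ _ hbP hbQ B hB (Or.inr (Or.inl h7)) μ hμ
    · intro μ hμ; rw [← hconj] at hμ
      exact aux_block_spec hn _ _ hbP hbQ B hB (Or.inr (Or.inr h8)) μ hμ
  -- the fixed point map
  let T : ((Fin n ⊕ Fin n) → ℝ) → ((Fin n ⊕ Fin n) → ℝ) := fun z =>
    Sum.elim (fun i => ((∑ j, aij i j * f j (z (Sum.inr j))) + I i) / a i)
             (fun i => ((∑ j, bij i j * g j (z (Sum.inl j))) + J i) / b i)
  have hA0 : ∀ s t, 0 ≤ A s t := by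
    intro s t
    rw [hA]
    rcases s with i | i <;> rcases t with j | j <;> simp [Matrix.fromBlocks]
    exacts [haP i j, haQ i j]
  have hT : ∀ z w s, |T z s - T w s| ≤ ∑ t, A s t * |z t - w t| := by
    intro z w s
    rcases s with i | i
    · have key : T z (Sum.inl i) - T w (Sum.inl i)
          = (∑ j, aij i j * (f j (z (Sum.inr j)) - f j (w (Sum.inr j)))) / a i := by
        show ((∑ j, aij i j * f j (z (Sum.inr j))) + I i) / a i
            - ((∑ j, aij i j * f j (w (Sum.inr j))) + I i) / a i = _
        rw [div_sub_div_same]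
        congr 1
        rw [add_sub_add_right_eq_sub, ← Finset.sum_sub_distrib]
        exact Finset.sum_congr rfl fun j _ => by ring
      have hsum : ∑ t, A (Sum.inl i) t * |z t - w t|
          = (∑ j, |aij i j| * Lf j * |z (Sum.inr j) - w (Sum.inr j)|) / a i := by
        rw [Fintype.sum_sum_type]
        have hz : ∑ j, A (Sum.inl i) (Sum.inl j) * |z (Sum.inl j) - w (Sum.inl j)| = 0 :=
          Finset.sum_eq_zero fun j _ => by simp [hA]
        rw [hz, zero_add, Finset.sum_div]
        refine Finset.sum_congr rfl fun j _ => ?_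
        rw [hA]
        simp only [Matrix.fromBlocks_apply₁₂, Matrix.of_apply]
        ring
      rw [key, hsum, abs_div, abs_of_pos (ha i)]
      gcongr
      · exact (ha i).le
      calc |∑ j, aij i j * (f j (z (Sum.inr j)) - f j (w (Sum.inr j)))|
          ≤ ∑ j, |aij i j * (f j (z (Sum.inr j)) - f j (w (Sum.inr j)))| :=
            Finset.abs_sum_le_sum_abs _ _
      _ ≤ ∑ j, |aij i j| * Lf j * |z (Sum.inr j) - w (Sum.inr j)| := by
            refine Finset.sum_le_sum fun j _ => ?_
            rw [abs_mul, mul_assoc]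
            exact mul_le_mul_of_nonneg_left (hf j _ _) (abs_nonneg _)
    · have key : T z (Sum.inr i) - T w (Sum.inr i)
          = (∑ j, bij i j * (g j (z (Sum.inl j)) - g j (w (Sum.inl j)))) / b i := by
        show ((∑ j, bij i j * g j (z (Sum.inl j))) + J i) / b i
            - ((∑ j, bij i j * g j (w (Sum.inl j))) + J i) / b i = _
        rw [div_sub_div_same]
        congr 1
        rw [add_sub_add_right_eq_sub, ← Finset.sum_sub_distrib]
        exact Finset.sum_congr rfl fun j _ => by ring
      have hsum : ∑ t, A (Sum.inr i) t * |z t - w t|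
          = (∑ j, |bij i j| * Lg j * |z (Sum.inl j) - w (Sum.inl j)|) / b i := by
        rw [Fintype.sum_sum_type]
        have hz : ∑ j, A (Sum.inr i) (Sum.inr j) * |z (Sum.inr j) - w (Sum.inr j)| = 0 :=
          Finset.sum_eq_zero fun j _ => by simp [hA]
        rw [hz, add_zero, Finset.sum_div]
        refine Finset.sum_congr rfl fun j _ => ?_
        rw [hA]
        simp only [Matrix.fromBlocks_apply₂₁, Matrix.of_apply]
        ring
      rw [key, hsum, abs_div, abs_of_pos (hb i)]
      gcongr
      · exact (hb i).le
      calc |∑ j, bij i j * (g j (z (Sum.inl j)) - g j (w (Sum.inl j)))|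
          ≤ ∑ j, |bij i j * (g j (z (Sum.inl j)) - g j (w (Sum.inl j)))| :=
            Finset.abs_sum_le_sum_abs _ _
      _ ≤ ∑ j, |bij i j| * Lg j * |z (Sum.inl j) - w (Sum.inl j)| := by
            refine Finset.sum_le_sum fun j _ => ?_
            rw [abs_mul, mul_assoc]
            exact mul_le_mul_of_nonneg_left (hg j _ _) (abs_nonneg _)
  obtain ⟨z, hz, huniq⟩ := aux_unique_fixed T A hA0 hT hspecA
  have hfix_iff : ∀ p : (Fin n → ℝ) × (Fin n → ℝ),
      ((∀ i, a i * p.1 i = ∑ j, aij i j * f j (p.2 j) + I i) ∧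
       (∀ i, b i * p.2 i = ∑ j, bij i j * g j (p.1 j) + J i))
      ↔ T (Sum.elim p.1 p.2) = Sum.elim p.1 p.2 := by
    intro p
    constructor
    · rintro ⟨h1, h2⟩
      funext s
      rcases s with i | i
      · show ((∑ j, aij i j * f j (p.2 j)) + I i) / a i = p.1 i
        rw [← h1 i, mul_div_cancel_left₀ _ (ha i).ne']
      · show ((∑ j, bij i j * g j (p.1 j)) + J i) / b i = p.2 i
        rw [← h2 i, mul_div_cancel_left₀ _ (hb i).ne']
    · intro hfx
      constructor
      · intro i
        have h := congrFun hfx (Sum.inl i)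
        have h' : ((∑ j, aij i j * f j (p.2 j)) + I i) / a i = p.1 i := h
        rw [div_eq_iff (ha i).ne'] at h'
        rw [h']
        ring
      · intro i
        have h := congrFun hfx (Sum.inr i)
        have h' : ((∑ j, bij i j * g j (p.1 j)) + J i) / b i = p.2 i := h
        rw [div_eq_iff (hb i).ne'] at h'
        rw [h']
        ring
  refine ⟨⟨fun i => z (Sum.inl i), fun i => z (Sum.inr i)⟩, ?_, ?_⟩
  · apply (hfix_iff _).mpr
    have hzz : Sum.elim (fun i => z (Sum.inl i)) (fun i => z (Sum.inr i)) = z := by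
      funext s; rcases s with i | i <;> rfl
    rw [hzz]
    exact hz
  · intro q hq
    have hq' := (hfix_iff q).mp hq
    have heq := huniq _ hq'
    exact Prod.ext (funext fun i => congrFun heq (Sum.inl i))
      (funext fun i => congrFun heq (Sum.inr i))
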